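/- arXiv:2603.00013 — 2 statements merged into one kernel-verified Lean document; each statement's English description precedes it below -/
import Mathlib

section
/- Let X and U be real Banach spaces, A : X → X and Q : U → X bounded linear operators, t ≥ 0, and let u : ℝ → U be differentiable with derivative u' such that u' is continuous. Then ∫₀^t exp((t−s) A) (Q (u'(s))) ds = Q(u(t)) − exp(t A)(Q(u(0))) + ∫₀^t exp((t−s) A) (A (Q (u(s)))) ds, where exp(r A) denotes the operator exponential of r A (the norm-convergent exponential series in the Banach algebra of bounded operators on X) and the integrals are Bochner integrals. -/
open NormedSpace intervalIntegral

set_option synthInstance.maxHeartbeats 1000000 in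
/-- Integration by parts for the convolution with a uniformly continuous semigroup
`exp((t−s)A)` (bounded generator `A`): the discrete-level Fattorini computation. -/
theorem fattorini_integration_by_parts
    {X U : Type*} [NormedAddCommGroup X] [NormedSpace ℝ X] [CompleteSpace X]
    [NormedAddCommGroup U] [NormedSpace ℝ U] [CompleteSpace U]
    (A : X →L[ℝ] X) (Q : U →L[ℝ] X) (t : ℝ) (ht : 0 ≤ t)
    (u u' : ℝ → U) (hderiv : ∀ s : ℝ, HasDerivAt u (u' s) s)
    (hcont : Continuous u') :
    ∫ s in (0 : ℝ)..t, (NormedSpace.exp ((t - s) • A)) (Q (u' s)) =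
      Q (u t) - (NormedSpace.exp (t • A)) (Q (u 0)) +
        ∫ s in (0 : ℝ)..t, (NormedSpace.exp ((t - s) • A)) (A (Q (u s))) := by
  have hucont : Continuous u := continuous_iff_continuousAt.2 fun s => (hderiv s).continuousAt
  have hexpcont : Continuous fun s : ℝ => NormedSpace.exp ((t - s) • A) := by
    let +nondep : NormedAlgebra ℚ (X →L[ℝ] X) := .restrictScalars ℚ ℝ (X →L[ℝ] X)
    exact (NormedSpace.exp_continuous.comp (by fun_prop))
  -- derivative of the product
  have key : ∀ s : ℝ, HasDerivAt (fun s => (NormedSpace.exp ((t - s) • A)) (Q (u s)))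
      ((NormedSpace.exp ((t - s) • A)) (Q (u' s)) -
        (NormedSpace.exp ((t - s) • A)) (A (Q (u s)))) s := by
    intro s
    have h1 : HasDerivAt (fun s : ℝ => NormedSpace.exp ((t - s) • A))
        (-(A * NormedSpace.exp ((t - s) • A))) s := by
      have h2 := (hasDerivAt_exp_smul_const' (𝕂 := ℝ) A (t - s))
      have h3 : HasDerivAt (fun s : ℝ => t - s) (-1) s := by
        simpa using (hasDerivAt_id s).const_sub t
      have := HasDerivAt.scomp s h2 h3
      simpa [neg_one_smul, Function.comp_def] using this
    have h4 : HasDerivAt (fun s => Q (u s)) (Q (u' s)) s := Q.hasFDerivAt.comp_hasDerivAt s (hderiv s)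
    have := h1.clm_apply h4
    have hc : A * NormedSpace.exp ((t - s) • A) =
        NormedSpace.exp ((t - s) • A) * A := by
      exact (Commute.smul_left (Commute.refl A) (t - s)).exp_left |>.symm
    rw [hc] at this
    convert this using 1
    simp [sub_eq_add_neg, add_comm, ContinuousLinearMap.mul_apply]
  have hi1 : IntervalIntegrable (fun s => (NormedSpace.exp ((t - s) • A)) (Q (u' s)))
      MeasureTheory.volume 0 t := by
    apply Continuous.intervalIntegrable
    exact hexpcont.clm_apply (by fun_prop)
  have hi2 : IntervalIntegrable (fun s => (NormedSpace.exp ((t - s) • A)) (A (Q (u s))))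
      MeasureTheory.volume 0 t := by
    apply Continuous.intervalIntegrable
    exact hexpcont.clm_apply (by fun_prop)
  have hftc := intervalIntegral.integral_eq_sub_of_hasDerivAt
    (fun s _ => key s) (hi1.sub hi2)
  rw [intervalIntegral.integral_sub hi1 hi2] at hftc
  have e0 : (NormedSpace.exp ((t - t) • A)) (Q (u t)) = Q (u t) := by
    simp [NormedSpace.exp_zero]
  have e1 : (NormedSpace.exp ((t - 0) • A)) (Q (u 0)) =
      (NormedSpace.exp (t • A)) (Q (u 0)) := by norm_num
  rw [e0, e1] at hftc
  exact eq_add_of_sub_eq hftc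
end

section
/- Let X be a real Banach space and for each n ∈ ℕ let Xₙ be a real Banach space with bounded linear operators Pₙ : X → Xₙ and Eₙ : Xₙ → X satisfying ‖Pₙ‖ ≤ μ_p and ‖Eₙ‖ ≤ μ_e for all n. Let U be a real normed space and t > 0. Suppose S : [0,∞) → L(X) and Sₙ : [0,∞) → L(Xₙ) satisfy: (i) for every r ≥ 0 and x ∈ X, Eₙ(Sₙ(r)(Pₙ x)) → S(r)x as n → ∞; (ii) ‖Sₙ(r)‖ ≤ Mₙ e^{−ωₙ r} for all r ≥ 0 with Mₙ → M* and ωₙ → ω* > 0. Then for every x₀ ∈ X and every r ∈ [0, t], ‖S(r) x₀‖ ≤ μ_p μ_e M* e^{−ω* r} ‖x₀‖. -/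
open Filter Topology

/-- The β-gain part of the ISS theorem: under Trotter–Kato approximation assumptions with
uniform exponential decay `‖Sₙ(r)‖ ≤ Mₙ e^{−ωₙ r}`, the homogeneous part of the limit
system satisfies `‖S(r)x₀‖ ≤ μp μe M* e^{−ω* r} ‖x₀‖` on `[0, t]`. -/
theorem iss_beta_gain_transfer
    {X : Type*} [NormedAddCommGroup X] [NormedSpace ℝ X] [CompleteSpace X]
    {Xn : ℕ → Type*} [∀ n, NormedAddCommGroup (Xn n)] [∀ n, NormedSpace ℝ (Xn n)]
    [∀ n, CompleteSpace (Xn n)]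
    {U : Type*} [NormedAddCommGroup U] [NormedSpace ℝ U]
    (P : ∀ n, X →L[ℝ] Xn n) (E : ∀ n, Xn n →L[ℝ] X)
    (μp μe : ℝ) (hμp : 0 < μp) (hμe : 0 < μe)
    (hP : ∀ n, ‖P n‖ ≤ μp) (hE : ∀ n, ‖E n‖ ≤ μe)
    (t : ℝ) (ht : 0 < t)
    (S : ℝ → X →L[ℝ] X) (Sn : ∀ n, ℝ → Xn n →L[ℝ] Xn n)
    (M ω : ℕ → ℝ) (Mstar ωstar : ℝ)
    (hconv : ∀ r : ℝ, 0 ≤ r → ∀ x : X,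
      Tendsto (fun n => E n (Sn n r (P n x))) atTop (𝓝 (S r x)))
    (hbound : ∀ n, ∀ r : ℝ, 0 ≤ r → ‖Sn n r‖ ≤ M n * Real.exp (-ω n * r))
    (hM : Tendsto M atTop (𝓝 Mstar)) (hω : Tendsto ω atTop (𝓝 ωstar))
    (hωstar : 0 < ωstar) :
    ∀ x₀ : X, ∀ r ∈ Set.Icc (0 : ℝ) t,
      ‖S r x₀‖ ≤ μp * μe * Mstar * Real.exp (-ωstar * r) * ‖x₀‖ := by
  intro x₀ r hr
  obtain ⟨hr0, -⟩ := hr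
  have h1 : Tendsto (fun n => ‖E n (Sn n r (P n x₀))‖) atTop (𝓝 ‖S r x₀‖) :=
    (continuous_norm.tendsto _).comp (hconv r hr0 x₀)
  have h2 : Tendsto (fun n => μe * (M n * Real.exp (-ω n * r)) * (μp * ‖x₀‖)) atTop
      (𝓝 (μe * (Mstar * Real.exp (-ωstar * r)) * (μp * ‖x₀‖))) := by
    apply Tendsto.mul_const
    apply Tendsto.const_mul
    exact hM.mul ((Real.continuous_exp.tendsto _).comp ((hω.neg).mul_const r))
  have key : ‖S r x₀‖ ≤ μe * (Mstar * Real.exp (-ωstar * r)) * (μp * ‖x₀‖) := by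
    refine le_of_tendsto_of_tendsto h1 h2 (Eventually.of_forall fun n => ?_)
    have hPx : ‖P n x₀‖ ≤ μp * ‖x₀‖ :=
      ((P n).le_opNorm _).trans (mul_le_mul_of_nonneg_right (hP n) (norm_nonneg _))
    have hSnx : ‖Sn n r (P n x₀)‖ ≤ (M n * Real.exp (-ω n * r)) * (μp * ‖x₀‖) :=
      ((Sn n r).le_opNorm _).trans
        (mul_le_mul (hbound n r hr0) hPx (norm_nonneg _)
          (le_trans (norm_nonneg _) (hbound n r hr0)))
    calc ‖E n (Sn n r (P n x₀))‖ ≤ ‖E n‖ * ‖Sn n r (P n x₀)‖ := (E n).le_opNorm _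
      _ ≤ μe * ((M n * Real.exp (-ω n * r)) * (μp * ‖x₀‖)) :=
          mul_le_mul (hE n) hSnx (norm_nonneg _) hμe.le
      _ = μe * (M n * Real.exp (-ω n * r)) * (μp * ‖x₀‖) := by ring
  calc ‖S r x₀‖ ≤ μe * (Mstar * Real.exp (-ωstar * r)) * (μp * ‖x₀‖) := key
    _ = μp * μe * Mstar * Real.exp (-ωstar * r) * ‖x₀‖ := by ring
end
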